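/- Let G' = (V',E') be a finite simple graph, r a positive integer, G = G(G',r) the gadget graph, and X = A₁ ∪ A₂ ∪ B. For every subset M ⊆ V', every vertex v ∈ M has degree at most r² + |M| − 1 in the subgraph of G induced on X ∪ M; moreover, if M is not a clique in G', then some vertex v ∈ M has degree at most r² + |M| − 2 in this induced subgraph. -/

import Mathlib

open SimpleGraph Set

/-- Vertex type of the gadget graph: the original vertices `V`, plus
`A₁` and `A₂` (each of size `r²`) and `B` (of size `r`). -/
abbrev GadgetV (V : Type*) (r : ℕ) : Type _ := V ⊕ (Fin (r ^ 2) ⊕ Fin (r ^ 2) ⊕ Fin r)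

/-- Membership in `A₁`. -/
def isA1 {V : Type*} {r : ℕ} : GadgetV V r → Prop
  | Sum.inr (Sum.inl _) => True
  | _ => False

/-- Membership in `A₂`. -/
def isA2 {V : Type*} {r : ℕ} : GadgetV V r → Prop
  | Sum.inr (Sum.inr (Sum.inl _)) => True
  | _ => False

/-- Membership in `B`. -/
def isB {V : Type*} {r : ℕ} : GadgetV V r → Prop
  | Sum.inr (Sum.inr (Sum.inr _)) => True
  | _ => False

/-- The gadget graph `G(G',r)`: all edges of `G'`, `A₁`, `A₂`, `B` are cliques,
all pairs between `A₁` and `A₂`, between `A₁` and `B`, and between `A₁` and `V'`.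
(A vertex of `A₁` is adjacent to every other vertex.) -/
def gadget {V : Type*} (G' : SimpleGraph V) (r : ℕ) : SimpleGraph (GadgetV V r) :=
  SimpleGraph.fromRel fun a b =>
    isA1 a ∨ (∃ u v, a = Sum.inl u ∧ b = Sum.inl v ∧ G'.Adj u v) ∨
      (isA2 a ∧ isA2 b) ∨ (isB a ∧ isB b)

/-- The set `X = A₁ ∪ A₂ ∪ B`. -/
def Xset (V : Type*) (r : ℕ) : Set (GadgetV V r) := {x | isA1 x ∨ isA2 x ∨ isB x}

/-- Degree of a vertex `v` in the subgraph of `G` induced on `Q`: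
the number of neighbors of `v` lying in `Q`. -/
noncomputable def degIn {W : Type*} (G : SimpleGraph W) (Q : Set W) (v : W) : ℕ :=
  (Q ∩ G.neighborSet v).ncard

/-- `Q` is a `γ`-quasi-clique in `G`: the induced subgraph `G[Q]` is connected and
every vertex of `Q` has degree at least `⌈γ·(|Q|-1)⌉` in `G[Q]`. -/
def IsQuasiClique {W : Type*} (G : SimpleGraph W) (γ : ℚ) (Q : Set W) : Prop :=
  (G.induce Q).Connected ∧ ∀ v ∈ Q, ⌈γ * ((Q.ncard : ℚ) - 1)⌉ ≤ (degIn G Q v : ℤ)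

/-- `γ_r = (r²+r−1)/(2r²+2r−1)`. -/
def gammaR (r : ℕ) : ℚ := ((r : ℚ) ^ 2 + r - 1) / (2 * (r : ℚ) ^ 2 + 2 * r - 1)


lemma gadget_nbhd_inl {V : Type*} (G' : SimpleGraph V) (r : ℕ) (M : Set V) (v : V) :
    (Xset V r ∪ Sum.inl '' M) ∩ (gadget G' r).neighborSet (Sum.inl v)
      = (Set.range fun i : Fin (r ^ 2) => (Sum.inr (Sum.inl i) : GadgetV V r))
        ∪ Sum.inl '' (M ∩ G'.neighborSet v) := by
  ext b
  rcases b with u | i | j | k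
  · simp only [Set.mem_inter_iff, Set.mem_union, Set.mem_setOf_eq, Xset, isA1, isA2, isB,
      SimpleGraph.mem_neighborSet, gadget, SimpleGraph.fromRel_adj, Set.mem_image,
      Set.mem_range, Sum.inl.injEq]
    constructor
    · rintro ⟨hmem, hne, hrel⟩
      rcases hmem with h | ⟨u', hu', rfl⟩
      · simp at h
      refine Or.inr ⟨u', ⟨hu', ?_⟩, rfl⟩
      rcases hrel with (h | ⟨a, b, ha, hb, hab⟩ | ⟨h, _⟩ | ⟨h, _⟩) |
          (h | ⟨a, b, ha, hb, hab⟩ | ⟨_, h⟩ | ⟨_, h⟩)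
      · simp [isA1] at h
      · cases ha; cases hb; exact hab
      · simp [isA2] at h
      · simp [isB] at h
      · simp [isA1] at h
      · cases ha; cases hb; exact hab.symm
      · simp [isA2] at h
      · simp [isB] at h
    · rintro (⟨i, h⟩ | ⟨u', ⟨hu', hadj⟩, rfl⟩)
      · exact absurd h (by simp)
      · exact ⟨Or.inr ⟨u', hu', rfl⟩, by simpa using (G'.ne_of_adj hadj),
          Or.inl (Or.inr (Or.inl ⟨v, u', rfl, rfl, hadj⟩))⟩
  · simp only [Set.mem_inter_iff, Set.mem_union, Set.mem_setOf_eq, Xset, isA1, isA2, isB,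
      SimpleGraph.mem_neighborSet, gadget, SimpleGraph.fromRel_adj, Set.mem_image,
      Set.mem_range]
    refine iff_of_true ⟨Or.inl (Or.inl trivial), ?_, Or.inr (Or.inl trivial)⟩ ?_
    · simp
    · exact Or.inl ⟨i, rfl⟩
  · simp only [Set.mem_inter_iff, Set.mem_union, Set.mem_setOf_eq, Xset, isA1, isA2, isB,
      SimpleGraph.mem_neighborSet, gadget, SimpleGraph.fromRel_adj, Set.mem_image,
      Set.mem_range]
    refine iff_of_false ?_ ?_
    · rintro ⟨-, -, (h | ⟨a, b, ha, hb, -⟩ | ⟨h, -⟩ | ⟨h, -⟩) |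
        (h | ⟨a, b, ha, hb, -⟩ | ⟨-, h⟩ | ⟨-, h⟩)⟩ <;>
        first
          | simp [isA1, isA2, isB] at h
          | (cases ha; cases hb)
          | simp_all
    · rintro (⟨i, h⟩ | ⟨u', -, h⟩) <;> simp_all
  · simp only [Set.mem_inter_iff, Set.mem_union, Set.mem_setOf_eq, Xset, isA1, isA2, isB,
      SimpleGraph.mem_neighborSet, gadget, SimpleGraph.fromRel_adj, Set.mem_image,
      Set.mem_range]
    refine iff_of_false ?_ ?_
    · rintro ⟨-, -, (h | ⟨a, b, ha, hb, -⟩ | ⟨h, -⟩ | ⟨h, -⟩) |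
        (h | ⟨a, b, ha, hb, -⟩ | ⟨-, h⟩ | ⟨-, h⟩)⟩ <;>
        first
          | simp [isA1, isA2, isB] at h
          | (cases ha; cases hb)
          | simp_all
    · rintro (⟨i, h⟩ | ⟨u', -, h⟩) <;> simp_all

lemma degIn_inl {V : Type*} [Fintype V] (G' : SimpleGraph V) (r : ℕ) (M : Set V) (v : V) :
    degIn (gadget G' r) (Xset V r ∪ Sum.inl '' M) (Sum.inl v)
      = r ^ 2 + (M ∩ G'.neighborSet v).ncard := by
  have hinj : Function.Injective fun i : Fin (r ^ 2) => (Sum.inr (Sum.inl i) : GadgetV V r) :=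
    fun a b h => by simpa using h
  rw [degIn, gadget_nbhd_inl, Set.ncard_union_eq ?_ (Set.toFinite _) (Set.toFinite _)]
  · rw [Set.ncard_image_of_injective _ Sum.inl_injective,
      ← Nat.card_coe_set_eq, Nat.card_range_of_injective hinj,
      Nat.card_eq_fintype_card, Fintype.card_fin]
  · rw [Set.disjoint_left]
    rintro x ⟨i, rfl⟩ ⟨u, -, h⟩
    simp at h

/-- For every subset `M ⊆ V'`, every vertex `v ∈ M` has degree at most
`r² + |M| − 1` in the subgraph of the gadget graph induced on `X ∪ M`; moreover,
if `M` is not a clique in `G'`, then some vertex of `M` has degree at most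
`r² + |M| − 2` in this induced subgraph. -/
theorem stmt_9 {V : Type*} [Fintype V] (G' : SimpleGraph V) (r : ℕ) (hr : 0 < r)
    (M : Set V) :
    (∀ v ∈ M,
        degIn (gadget G' r) (Xset V r ∪ Sum.inl '' M) (Sum.inl v) ≤ r ^ 2 + M.ncard - 1) ∧
      (¬ G'.IsClique M → ∃ v ∈ M,
        degIn (gadget G' r) (Xset V r ∪ Sum.inl '' M) (Sum.inl v) ≤ r ^ 2 + M.ncard - 2) := by
  have hcard : ∀ v ∈ M, (M ∩ G'.neighborSet v).ncard ≤ M.ncard - 1 := by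
    intro v hv
    have hsub : M ∩ G'.neighborSet v ⊆ M \ {v} := by
      rintro x ⟨hx, hadj⟩
      exact ⟨hx, fun h => G'.irrefl (h ▸ hadj)⟩
    calc (M ∩ G'.neighborSet v).ncard ≤ (M \ {v}).ncard :=
          Set.ncard_le_ncard hsub (Set.toFinite _)
      _ = M.ncard - 1 := Set.ncard_diff_singleton_of_mem hv
  constructor
  · intro v hv
    have h1 : 0 < M.ncard := (Set.ncard_pos (Set.toFinite _)).mpr ⟨v, hv⟩
    have := hcard v hv
    rw [degIn_inl]
    omega
  · intro hnc
    simp only [SimpleGraph.IsClique, Set.Pairwise] at hnc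
    push_neg at hnc
    obtain ⟨u, hu, w, hw, hne, hnadj⟩ := hnc
    refine ⟨u, hu, ?_⟩
    have hsub : M ∩ G'.neighborSet u ⊆ M \ {u, w} := by
      rintro x ⟨hx, hadj⟩
      refine ⟨hx, ?_⟩
      rintro (rfl | rfl)
      · exact G'.irrefl hadj
      · exact hnadj hadj
    have hpair : ({u, w} : Set V) ⊆ M := by
      rintro x (rfl | rfl) <;> assumption
    have h2 : ({u, w} : Set V).ncard = 2 := Set.ncard_pair hne
    have h3 : (M \ {u, w}).ncard = M.ncard - 2 := by
      rw [Set.ncard_diff hpair (Set.toFinite _), h2]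
    have h4 : 2 ≤ M.ncard := h2 ▸ Set.ncard_le_ncard hpair (Set.toFinite _)
    have h5 : (M ∩ G'.neighborSet u).ncard ≤ (M \ {u, w}).ncard :=
      Set.ncard_le_ncard hsub (Set.toFinite _)
    rw [degIn_inl]
    omega
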